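/- arXiv:2205.07068 — 3 statements merged into one kernel-verified Lean document; each statement's English description precedes it below -/
import Mathlib

section
/- Let M₀ = (m̃_{ij})_{i,j=0}^{2} be a 3×3 real symmetric positive definite matrix, and define the 3×3 matrix B with rows: row 2 = (2 m̃_{22}², 0, 0); row 0 = (2 m̃_{20} m̃_{22}, m̃_{10} m̃_{22} - m̃_{20} m̃_{12}, 2 m̃_{22} m̃_{00} - m̃_{12} m̃_{10} + m̃_{20} m̃_{12}²/m̃_{22} - 2 m̃_{20}²); row 1 = (2 m̃_{21} m̃_{22}, m̃_{11} m̃_{22} - m̃_{21}², 2 m̃_{22} m̃_{01} - m̃_{12} m̃_{11} + m̃_{12}³/m̃_{22} - 2 m̃_{21} m̃_{02}). Then det B ≠ 0. -/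
theorem stmt_8 (M : Matrix (Fin 3) (Fin 3) ℝ) (hM : M.IsSymm) (hpd : M.PosDef)
    (B : Matrix (Fin 3) (Fin 3) ℝ)
    (hB : B = !![2 * M 2 0 * M 2 2,
                 M 1 0 * M 2 2 - M 2 0 * M 1 2,
                 2 * M 2 2 * M 0 0 - M 1 2 * M 1 0 + M 2 0 * (M 1 2) ^ 2 / M 2 2
                   - 2 * (M 2 0) ^ 2;
                 2 * M 2 1 * M 2 2,
                 M 1 1 * M 2 2 - (M 2 1) ^ 2,
                 2 * M 2 2 * M 0 1 - M 1 2 * M 1 1 + (M 1 2) ^ 3 / M 2 2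
                   - 2 * M 2 1 * M 0 2;
                 2 * (M 2 2) ^ 2, 0, 0]) :
    B.det ≠ 0 := by
  have hc : 0 < M 2 2 := by
    exact hpd.diag_pos
  have hdet : 0 < M.det := hpd.det_pos
  have hcne : M 2 2 ≠ 0 := ne_of_gt hc
  have h01 : M 0 1 = M 1 0 := (hM.apply 1 0).symm ▸ rfl
  have h02 : M 0 2 = M 2 0 := (hM.apply 2 0).symm ▸ rfl
  have h12 : M 1 2 = M 2 1 := (hM.apply 2 1).symm ▸ rfl
  rw [Matrix.det_fin_three] at hdet
  have key : B.det = -4 * (M 2 2) ^ 3 *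
      (M 0 0 * M 1 1 * M 2 2 - M 0 0 * M 1 2 * M 2 1 - M 0 1 * M 1 0 * M 2 2
        + M 0 1 * M 1 2 * M 2 0 + M 0 2 * M 1 0 * M 2 1 - M 0 2 * M 1 1 * M 2 0) := by
    subst hB
    simp [Matrix.det_fin_three]
    field_simp
    rw [h01, h02, h12]
    ring
  rw [key]
  have h3 : (0:ℝ) < (M 2 2) ^ 3 := by positivity
  nlinarith [mul_pos h3 hdet]
end

section
/- Let M₀ = (m̃_{ij})_{i,j=0}^{2} be a 3×3 real symmetric matrix with m̃_{22} ≠ 0 and Δ₂ := m̃_{22} m̃_{11} - m̃_{12}² ≠ 0, and B = (b_{ij}) a real 3×3 matrix. Then the six equations (3×3 symmetry conditions): (1) b_{10} m̃_{00} + b_{11} m̃_{10} + b_{12} m̃_{20} = b_{00} m̃_{01} + b_{01} m̃_{11} + b_{02} m̃_{21}; (2) b_{10} m̃_{10} + 2b_{11} m̃_{20} = b_{00} m̃_{11} + 2b_{01} m̃_{21}; (3) b_{20} m̃_{00} + b_{21} m̃_{10} + b_{22} m̃_{20} = b_{00} m̃_{02} + b_{01} m̃_{12} + b_{02} m̃_{22};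 (4) b_{20} m̃_{10} + 2b_{21} m̃_{20} = b_{00} m̃_{12} + 2b_{01} m̃_{22}; (5) b_{20} m̃_{01} + b_{21} m̃_{11} + b_{22} m̃_{21} = b_{10} m̃_{02} + b_{11} m̃_{12} + b_{12} m̃_{22}; (6) b_{20} m̃_{11} + 2b_{21} m̃_{21} = b_{10} m̃_{12} + 2b_{11} m̃_{22}; hold simultaneously if and only if equations (3)-(6) hold together with b_{10} = b_{20} m̃_{21}/m̃_{22} and b_{00} = b_{10}(m̃_{22}/Δ₂)(m̃_{10} - m̃_{20} m̃_{12}/m̃_{22}) - b_{20}(m̃_{21} m̃_{10} - m̃_{20} m̃_{11})/Δ₂, provided det M₀ ≠ 0. -/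
theorem stmt_11 (M B : Matrix (Fin 3) (Fin 3) ℝ) (hM : M.IsSymm)
    (h22 : M 2 2 ≠ 0) (Δ₂ : ℝ) (hΔ₂ : Δ₂ = M 2 2 * M 1 1 - (M 1 2) ^ 2)
    (hΔ₂ne : Δ₂ ≠ 0) (hdet : M.det ≠ 0) :
    (B 1 0 * M 0 0 + B 1 1 * M 1 0 + B 1 2 * M 2 0
        = B 0 0 * M 0 1 + B 0 1 * M 1 1 + B 0 2 * M 2 1 ∧
     B 1 0 * M 1 0 + 2 * B 1 1 * M 2 0 = B 0 0 * M 1 1 + 2 * B 0 1 * M 2 1 ∧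
     B 2 0 * M 0 0 + B 2 1 * M 1 0 + B 2 2 * M 2 0
        = B 0 0 * M 0 2 + B 0 1 * M 1 2 + B 0 2 * M 2 2 ∧
     B 2 0 * M 1 0 + 2 * B 2 1 * M 2 0 = B 0 0 * M 1 2 + 2 * B 0 1 * M 2 2 ∧
     B 2 0 * M 0 1 + B 2 1 * M 1 1 + B 2 2 * M 2 1
        = B 1 0 * M 0 2 + B 1 1 * M 1 2 + B 1 2 * M 2 2 ∧
     B 2 0 * M 1 1 + 2 * B 2 1 * M 2 1 = B 1 0 * M 1 2 + 2 * B 1 1 * M 2 2) ↔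
    (B 2 0 * M 0 0 + B 2 1 * M 1 0 + B 2 2 * M 2 0
        = B 0 0 * M 0 2 + B 0 1 * M 1 2 + B 0 2 * M 2 2 ∧
     B 2 0 * M 1 0 + 2 * B 2 1 * M 2 0 = B 0 0 * M 1 2 + 2 * B 0 1 * M 2 2 ∧
     B 2 0 * M 0 1 + B 2 1 * M 1 1 + B 2 2 * M 2 1
        = B 1 0 * M 0 2 + B 1 1 * M 1 2 + B 1 2 * M 2 2 ∧
     B 2 0 * M 1 1 + 2 * B 2 1 * M 2 1 = B 1 0 * M 1 2 + 2 * B 1 1 * M 2 2 ∧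
     B 1 0 = B 2 0 * M 2 1 / M 2 2 ∧
     B 0 0 = B 1 0 * (M 2 2 / Δ₂) * (M 1 0 - M 2 0 * M 1 2 / M 2 2)
        - B 2 0 * (M 2 1 * M 1 0 - M 2 0 * M 1 1) / Δ₂) := by
  have h01 : M 0 1 = M 1 0 := hM.apply 1 0
  have h02 : M 0 2 = M 2 0 := hM.apply 2 0
  have h12 : M 1 2 = M 2 1 := hM.apply 2 1
  have hdet' : M.det = M 0 0 * (M 1 1 * M 2 2 - M 2 1 ^ 2)
      - M 1 0 * (M 1 0 * M 2 2 - M 2 0 * M 2 1)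
      + M 2 0 * (M 1 0 * M 2 1 - M 1 1 * M 2 0) := by
    rw [Matrix.det_fin_three, h01, h02, h12]; ring
  subst hΔ₂
  rw [hdet'] at hdet
  simp only [h01, h02, h12] at hΔ₂ne ⊢
  set a := M 0 0 with ha
  set p := M 1 0 with hp
  set q := M 2 0 with hq
  set d := M 1 1 with hd
  set r := M 2 1 with hr
  set s := M 2 2 with hs
  constructor
  · rintro ⟨h1, h2, h3, h4, h5, h6⟩
    have hK : (-2) * s * (a * (d * s - r ^ 2) - p * (p * s - q * r) + q * (p * r - d * q)) ≠ 0 :=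
      mul_ne_zero (mul_ne_zero (by norm_num) h22) hdet
    have f1 : B 1 0 * s = B 2 0 * r := by
      apply mul_left_cancel₀ hK
      linear_combination (-2*s^2*(d*s - r^2)) * h1
        + (s*(2*s*(p*s - q*r) - r*(d*s - r^2))) * h2
        + (2*r*s*(d*s - r^2)) * h3
        + (s*(d*(d*s - r^2) - 2*r*(p*s - q*r))) * h4
        + (-2*q*s*(d*s - r^2)) * h5
        + (s*(2*q*(p*s - q*r) - p*(d*s - r^2))) * h6
    have star : B 0 0 * (s * d - r ^ 2)
        = B 1 0 * (s * p - q * r) + B 2 0 * (q * d - r * p) := by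
      linear_combination (-s) * h2 + r * h4 + (-q) * h6
    refine ⟨h3, h4, h5, h6, ?_, ?_⟩
    · rw [eq_div_iff h22]; exact f1
    · have expand : B 1 0 * (s / (s * d - r ^ 2)) * (p - q * r / s)
          - B 2 0 * (r * p - q * d) / (s * d - r ^ 2)
          = (B 1 0 * (s * p - q * r) + B 2 0 * (q * d - r * p)) / (s * d - r ^ 2) := by
        field_simp; ring
      rw [expand, eq_div_iff hΔ₂ne]; exact star
  · rintro ⟨h3, h4, h5, h6, hb10, hb00⟩
    have f1 : B 1 0 * s = B 2 0 * r := (eq_div_iff h22).mp hb10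
    have f2 : B 0 0 * (s * d - r ^ 2)
        = B 1 0 * (s * p - q * r) + B 2 0 * (q * d - r * p) := by
      apply mul_left_cancel₀ (mul_ne_zero h22 hΔ₂ne)
      field_simp at hb00
      linear_combination (s * (s * d - r ^ 2)) * hb00
    have e2 : B 1 0 * p + 2 * B 1 1 * q = B 0 0 * d + 2 * B 0 1 * r := by
      apply mul_left_cancel₀ h22
      linear_combination r * h4 + (-q) * h6 + (-1) * f2
    have e1 : B 1 0 * a + B 1 1 * p + B 1 2 * q
        = B 0 0 * p + B 0 1 * d + B 0 2 * r := by
      apply mul_left_cancel₀ (mul_ne_zero (mul_ne_zero two_ne_zero (pow_ne_zero 2 h22)) hΔ₂ne)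
      linear_combination (2*r*s*(s*d - r^2)) * h3
        + (-(2*q*s*(s*d - r^2))) * h5
        + (-(2*s*(p*s - q*r) - r*(s*d - r^2))) * f2
        + (-((s*d - r^2)*(p*s - q*r))) * h6
        + (2*s*(a*(d*s - r^2) - p*(p*s - q*r) + q*(p*r - d*q))) * f1
        + ((s*d - r^2)^2) * h4
    exact ⟨e1, e2, h3, h4, h5, h6⟩
end

section
/- Let M₀ be a 3×3 real symmetric positive definite matrix and B the matrix from the explicit construction (row 2 = (2 m̃_{22}², 0, 0), rows 0 and 1 as determined by the symmetry equations with b_{20} = 2 m̃_{22}², b_{21} = b_{22} = 0). Then for the matrix A(z) with diagonal z, superdiagonal (1, 2), and C(z) = B·A(z), both B·M₀ and C(z)·M₀ are symmetric for every real z, and B is invertible. -/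
set_option maxHeartbeats 2000000 in
theorem stmt_15 (M : Matrix (Fin 3) (Fin 3) ℝ) (hM : M.IsSymm) (hpd : M.PosDef)
    (B : Matrix (Fin 3) (Fin 3) ℝ)
    (hB : B = !![2 * M 2 0 * M 2 2,
                 M 1 0 * M 2 2 - M 2 0 * M 1 2,
                 2 * M 2 2 * M 0 0 - M 1 2 * M 1 0 + M 2 0 * (M 1 2) ^ 2 / M 2 2
                   - 2 * (M 2 0) ^ 2;
                 2 * M 2 1 * M 2 2,
                 M 1 1 * M 2 2 - (M 2 1) ^ 2,
                 2 * M 2 2 * M 0 1 - M 1 2 * M 1 1 + (M 1 2) ^ 3 / M 2 2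
                   - 2 * M 2 1 * M 0 2;
                 2 * (M 2 2) ^ 2, 0, 0])
    (A : ℝ → Matrix (Fin 3) (Fin 3) ℝ)
    (hA : ∀ z, A z = !![z, 1, 0; 0, z, 2; 0, 0, z]) :
    (B * M).IsSymm ∧ (∀ z : ℝ, ((B * A z) * M).IsSymm) ∧ IsUnit B := by
  have hf : 0 < M 2 2 := by
    exact hpd.diag_pos
  have hf' : M 2 2 ≠ 0 := ne_of_gt hf
  have e01 : M 0 1 = M 1 0 := (hM.apply 0 1).symm ▸ (hM.apply 1 0)
  have e02 : M 0 2 = M 2 0 := (hM.apply 0 2).symm ▸ (hM.apply 2 0)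
  have e12 : M 1 2 = M 2 1 := (hM.apply 1 2).symm ▸ (hM.apply 2 1)
  subst hB
  refine ⟨?_, ?_, ?_⟩
  · rw [Matrix.IsSymm]
    ext i j
    fin_cases i <;> fin_cases j <;>
      simp [Matrix.mul_apply, Matrix.vecMul, dotProduct, Fin.sum_univ_three,
        e01, e02, e12] <;>
      field_simp <;> ring
  · intro z
    rw [hA z, Matrix.IsSymm]
    ext i j
    fin_cases i <;> fin_cases j <;>
      simp [Matrix.mul_apply, Matrix.vecMul, dotProduct, Fin.sum_univ_three,
        e01, e02, e12] <;>
      field_simp <;> ring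
  · rw [Matrix.isUnit_iff_isUnit_det]
    have hdet : (!![2 * M 2 0 * M 2 2,
                 M 1 0 * M 2 2 - M 2 0 * M 1 2,
                 2 * M 2 2 * M 0 0 - M 1 2 * M 1 0 + M 2 0 * (M 1 2) ^ 2 / M 2 2
                   - 2 * (M 2 0) ^ 2;
                 2 * M 2 1 * M 2 2,
                 M 1 1 * M 2 2 - (M 2 1) ^ 2,
                 2 * M 2 2 * M 0 1 - M 1 2 * M 1 1 + (M 1 2) ^ 3 / M 2 2
                   - 2 * M 2 1 * M 0 2;
                 2 * (M 2 2) ^ 2, 0, 0] : Matrix (Fin 3) (Fin 3) ℝ).det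
        = -4 * (M 2 2) ^ 3 * M.det := by
      rw [Matrix.det_fin_three, Matrix.det_fin_three]
      simp [e01, e02, e12]
      field_simp
      ring
    rw [hdet]
    have hd := hpd.det_pos
    have : -4 * (M 2 2) ^ 3 * M.det < 0 := by nlinarith [pow_pos hf 3]
    exact isUnit_iff_ne_zero.mpr this.ne
end
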